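/- Let d₁, d₂ > 0 and suppose η(R_m) is a root of η³ + d₂η² + d₁η + d₀(R_m) = 0 depending differentiably on R_m with η(R_m*) = i√d₁. Then Re(η′(R_m*)) = d₀′(R_m*)/(2(d₁ + d₂²)); in particular Re(η′(R_m*)) ≠ 0 whenever d₀′(R_m*) ≠ 0. -/

import Mathlib

/-- Transversality: if η(R_m) is a differentiable branch of roots of the
characteristic cubic with η(R_m*) = i√d₁, then
Re η′(R_m*) = d₀′(R_m*)/(2(d₁+d₂²)). -/
theorem transversality (d1 d2 : ℝ) (h1 : 0 < d1) (h2 : 0 < d2)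
    (d0 : ℝ → ℝ) (η : ℝ → ℂ) (Rms : ℝ)
    (hd0 : DifferentiableAt ℝ d0 Rms) (hη : DifferentiableAt ℝ η Rms)
    (hroot : ∀ r : ℝ, η r ^ 3 + (d2 : ℂ) * η r ^ 2 + (d1 : ℂ) * η r + (d0 r : ℂ) = 0)
    (hstar : η Rms = Complex.I * Real.sqrt d1) :
    (deriv η Rms).re = deriv d0 Rms / (2 * (d1 + d2 ^ 2)) ∧
    (deriv d0 Rms ≠ 0 → (deriv η Rms).re ≠ 0) := by
  set s : ℝ := Real.sqrt d1 with hs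
  have hs2 : s * s = d1 := Real.mul_self_sqrt h1.le
  have hη' : HasDerivAt η (deriv η Rms) Rms := hη.hasDerivAt
  have hd0' : HasDerivAt d0 (deriv d0 Rms) Rms := hd0.hasDerivAt
  have hd0ℂ : HasDerivAt (fun r => ((d0 r : ℂ))) (((deriv d0 Rms : ℝ) : ℂ)) Rms :=
    hd0'.ofReal_comp
  have hmul2 : HasDerivAt (fun r => η r * η r)
      (deriv η Rms * η Rms + η Rms * deriv η Rms) Rms := hη'.mul hη'
  have hmul3 : HasDerivAt (fun r => η r * η r * η r)
      ((deriv η Rms * η Rms + η Rms * deriv η Rms) * η Rms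
        + η Rms * η Rms * deriv η Rms) Rms := hmul2.mul hη'
  have hF : HasDerivAt (fun r => η r ^ 3 + (d2 : ℂ) * η r ^ 2 + (d1 : ℂ) * η r + (d0 r : ℂ))
      ((3 * η Rms ^ 2 + 2 * d2 * η Rms + d1) * deriv η Rms + deriv d0 Rms) Rms := by
    have h := ((hmul3.add (hmul2.const_mul (d2 : ℂ))).add
      (hη'.const_mul (d1 : ℂ))).add hd0ℂ
    have hfe : (fun r => η r ^ 3 + (d2 : ℂ) * η r ^ 2 + (d1 : ℂ) * η r + (d0 r : ℂ))
        =ᶠ[nhds Rms] (fun r => η r * η r * η r + (d2 : ℂ) * (η r * η r)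
          + (d1 : ℂ) * η r + (d0 r : ℂ)) :=
      Filter.Eventually.of_forall fun r => by ring
    have h2 := h.congr_of_eventuallyEq hfe
    convert h2 using 1
    · rfl
    · ring
  have heq : (3 * η Rms ^ 2 + 2 * d2 * η Rms + d1) * deriv η Rms + deriv d0 Rms = 0 := by
    have h0 : HasDerivAt (fun _ : ℝ => (0 : ℂ)) 0 Rms := hasDerivAt_const _ _
    have hfun : (fun r => η r ^ 3 + (d2 : ℂ) * η r ^ 2 + (d1 : ℂ) * η r + (d0 r : ℂ))
        = fun _ : ℝ => (0 : ℂ) := funext hroot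
    rw [hfun] at hF
    exact hF.unique h0
  rw [hstar] at heq
  have hI2 : Complex.I ^ 2 = -1 := Complex.I_sq
  set a := deriv η Rms with ha
  have hre := congrArg Complex.re heq
  have him := congrArg Complex.im heq
  simp [Complex.add_re, Complex.mul_re, Complex.mul_im, Complex.add_im, hI2,
    Complex.ofReal_re, Complex.ofReal_im, pow_two] at hre him
  rw [hs2] at hre him
  have key : a.re = deriv d0 Rms / (2 * (d1 + d2 ^ 2)) := by
    have hpos : (2 : ℝ) * (d1 + d2 ^ 2) ≠ 0 := by positivity
    rw [eq_div_iff hpos]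
    have hscaled : d1 * (a.re * (2 * (d1 + d2 ^ 2))) = d1 * deriv d0 Rms := by
      linear_combination (-d1) * hre + (s * d2) * him - 2 * d2 ^ 2 * a.re * hs2
    exact mul_left_cancel₀ h1.ne' hscaled
  refine ⟨key, fun hne hcontra => hne ?_⟩
  rw [key] at hcontra
  have hpos : (2 : ℝ) * (d1 + d2 ^ 2) ≠ 0 := by positivity
  field_simp at hcontra
  simpa using hcontra
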